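/- If sup_{x ∈ B_ρ(0)} ∫_{ℝ^d} (1 ∧ |y|²) k_s(x,x+y) dy < ∞ for every ρ > 0, then the discretized conductances satisfy limsup_n sup_{a ∈ B_ρ(0) ∩ (1/n)ℤ^d} Σ_{b ∈ (1/n)ℤ^d} (1 ∧ |b|²) C^{n,p}_s(a,a+b) < ∞ for every ρ > 0 and 0 < p ≤ 1. -/

import Mathlib

open MeasureTheory Filter Topology
open scoped ENNReal NNReal Pointwise

noncomputable section

abbrev Eucl (d : ℕ) := EuclideanSpace ℝ (Fin d)

/-- The point of `ℝ^d` corresponding to the lattice point `a/n`, `a ∈ ℤ^d`. -/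
def latticePt (d n : ℕ) (a : Fin d → ℤ) : Eucl d := WithLp.toLp 2 (fun i => (a i : ℝ) / n)

/-- The half-open cube of side `1/n` centred at the lattice point `a/n`. -/
def cube (d n : ℕ) (a : Fin d → ℤ) : Set (Eucl d) :=
  {x | ∀ i, (a i : ℝ)/n - 1/(2*n) ≤ x i ∧ x i < (a i : ℝ)/n + 1/(2*n)}

/-- `[x]_n`: the index of the lattice point of `(1/n)ℤ^d` nearest to `x`. -/
def lattOf (d n : ℕ) (x : Eucl d) : Fin d → ℤ := fun i => ⌊n * x i + 1/2⌋

/-- The discretised conductances `C^{n,p}(a,b) = n^d ∫_{ā}∫_{b̄} k(x,y) dx dy` for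
`|a−b| > 2√d/n^p` and `0` otherwise (extended-real valued version). -/
def CnpE (d n : ℕ) (p : ℝ) (k : Eucl d → Eucl d → ℝ) (a b : Fin d → ℤ) : ℝ≥0∞ :=
  if ‖latticePt d n a - latticePt d n b‖ > 2 * Real.sqrt d / (n : ℝ) ^ p then
    (n : ℝ≥0∞) ^ d * ∫⁻ x in cube d n a, ∫⁻ y in cube d n b, ENNReal.ofReal (k x y)
  else 0

/-- Symmetric part of the discretised conductances. -/
def CnpEs (d n : ℕ) (p : ℝ) (k : Eucl d → Eucl d → ℝ) (a b : Fin d → ℤ) : ℝ≥0∞ :=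
  (CnpE d n p k a b + CnpE d n p k b a) / 2

lemma latticePt_add (d n : ℕ) (a b : Fin d → ℤ) :
    latticePt d n (a + b) = latticePt d n a + latticePt d n b := by
  ext i
  show ((a i + b i : ℤ) : ℝ) / n = (a i : ℝ)/n + (b i : ℝ)/n
  push_cast; ring


lemma cube_measurable (d n : ℕ) (a : Fin d → ℤ) : MeasurableSet (cube d n a) := by
  have h : cube d n a = ⋂ i, (fun x : Eucl d => x i) ⁻¹'
      Set.Ico ((a i:ℝ)/n - 1/(2*n)) ((a i:ℝ)/n + 1/(2*n)) := by
    ext x; simp [cube, Set.mem_Ico]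
  rw [h]
  exact MeasurableSet.iInter fun i => (show Measurable fun x : Eucl d => x i by fun_prop) measurableSet_Ico


lemma cube_disjoint (d n : ℕ) (hn : 1 ≤ n) {a b : Fin d → ℤ} (hab : a ≠ b) :
    Disjoint (cube d n a) (cube d n b) := by
  have hn0 : (0:ℝ) < n := by exact_mod_cast Nat.lt_of_lt_of_le Nat.zero_lt_one hn
  rw [Set.disjoint_left]
  intro x hxa hxb
  apply hab
  funext i
  have h1 := hxa i
  have h2 := hxb i
  have hhalf : 2 * (1/(2*(n:ℝ))) = 1/n := by field_simp
  have h3 : |(a i:ℝ)/n - (b i:ℝ)/n| < 1/n := by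
    rw [abs_lt]; constructor <;> linarith [h1.1, h1.2, h2.1, h2.2]
  rw [div_sub_div_same, abs_div, abs_of_pos hn0, div_lt_div_iff_of_pos_right hn0] at h3
  have h4 : |(a i - b i : ℤ)| < 1 := by
    have : |((a i - b i : ℤ) : ℝ)| < 1 := by push_cast; exact h3
    exact_mod_cast this
  have := Int.abs_lt_one_iff.mp h4
  omega


lemma norm_sub_latticePt_le (d n : ℕ) (hn : 1 ≤ n) {a : Fin d → ℤ} {x : Eucl d}
    (hx : x ∈ cube d n a) : ‖x - latticePt d n a‖ ≤ Real.sqrt d / (2 * n) := by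
  have hn0 : (0:ℝ) < n := by exact_mod_cast Nat.lt_of_lt_of_le Nat.zero_lt_one hn
  rw [EuclideanSpace.norm_eq]
  have h1 : ∀ i, ‖(x - latticePt d n a) i‖^2 ≤ (1/(2*(n:ℝ)))^2 := by
    intro i
    have hxi := hx i
    have he : (x - latticePt d n a) i = x i - (a i:ℝ)/n := by simp [latticePt]
    rw [he, Real.norm_eq_abs, sq_abs]
    have h2 : |x i - (a i:ℝ)/n| ≤ 1/(2*(n:ℝ)) := by
      rw [abs_le]; constructor
      · linarith [hxi.1]
      · linarith [hxi.2]
    calc (x i - (a i:ℝ)/n)^2 = |x i - (a i:ℝ)/n|^2 := (sq_abs _).symm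
      _ ≤ (1/(2*(n:ℝ)))^2 := by
          apply pow_le_pow_left₀ (abs_nonneg _) h2
  calc Real.sqrt (∑ i, ‖(x - latticePt d n a) i‖^2)
      ≤ Real.sqrt (∑ _i : Fin d, (1/(2*(n:ℝ)))^2) :=
        Real.sqrt_le_sqrt (Finset.sum_le_sum fun i _ => h1 i)
    _ = Real.sqrt (d * (1/(2*(n:ℝ)))^2) := by
        rw [Finset.sum_const, Finset.card_univ, Fintype.card_fin, nsmul_eq_mul]
    _ = Real.sqrt d * (1/(2*(n:ℝ))) := by
        rw [Real.sqrt_mul (by positivity), Real.sqrt_sq (by positivity)]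
    _ = Real.sqrt d / (2*n) := by ring


lemma volume_cube (d n : ℕ) (a : Fin d → ℤ) :
    volume (cube d n a) = (ENNReal.ofReal (1 / (n:ℝ))) ^ d := by
  have h := (EuclideanSpace.volume_preserving_symm_measurableEquiv_toLp (Fin d)).symm
  have hpre : cube d n a = (MeasurableEquiv.toLp 2 (Fin d → ℝ)).symm ⁻¹'
      (Set.univ.pi fun i => Set.Ico ((a i:ℝ)/n - 1/(2*n)) ((a i:ℝ)/n + 1/(2*n))) := by
    ext x
    simp [cube, Set.mem_pi, Set.mem_Ico]
  rw [hpre, (EuclideanSpace.volume_preserving_symm_measurableEquiv_toLp (Fin d)).measure_preimage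
    (MeasurableSet.univ_pi fun i => measurableSet_Ico).nullMeasurableSet]
  rw [volume_pi_pi]
  have : ∀ i : Fin d, volume (Set.Ico ((a i:ℝ)/n - 1/(2*n)) ((a i:ℝ)/n + 1/(2*n)))
      = ENNReal.ofReal (1/(n:ℝ)) := by
    intro i
    rw [Real.volume_Ico]
    congr 1
    ring
  simp only [this, Finset.prod_const, Finset.card_univ, Fintype.card_fin]


lemma min_sq_bound (d n : ℕ) (hn : 1 ≤ n) {a b : Fin d → ℤ} {x y : Eucl d}
    (hb : 2 * Real.sqrt d / n < ‖latticePt d n b‖)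
    (hx : x ∈ cube d n a) (hy : y ∈ cube d n (a + b)) :
    min 1 (‖latticePt d n b‖^2) ≤ 4 * min 1 (‖y - x‖^2) := by
  have hn0 : (0:ℝ) < n := by exact_mod_cast Nat.lt_of_lt_of_le Nat.zero_lt_one hn
  set r := ‖latticePt d n b‖ with hr
  set s := ‖y - x‖ with hs
  have hu : ‖y - latticePt d n (a + b)‖ ≤ Real.sqrt d / (2*n) := norm_sub_latticePt_le d n hn hy
  have hv : ‖x - latticePt d n a‖ ≤ Real.sqrt d / (2*n) := norm_sub_latticePt_le d n hn hx
  have hdec : latticePt d n b = (y - x) - (y - latticePt d n (a+b)) + (x - latticePt d n a) := by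
    rw [latticePt_add]; abel
  have hrle : r ≤ s + Real.sqrt d / (2*n) + Real.sqrt d / (2*n) := by
    calc r = ‖(y - x) - (y - latticePt d n (a+b)) + (x - latticePt d n a)‖ := by rw [hr, hdec]
      _ ≤ ‖(y - x) - (y - latticePt d n (a+b))‖ + ‖x - latticePt d n a‖ := norm_add_le _ _
      _ ≤ ‖y - x‖ + ‖y - latticePt d n (a+b)‖ + ‖x - latticePt d n a‖ := by
          linarith [norm_sub_le (y - x) (y - latticePt d n (a+b))]
      _ ≤ s + Real.sqrt d / (2*n) + Real.sqrt d / (2*n) := by rw [← hs]; linarith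
  have hsd : Real.sqrt d / (n:ℝ) < r / 2 := by
    have h2 : 2 * (Real.sqrt d / (n:ℝ)) = 2 * Real.sqrt d / n := by ring
    linarith
  have hr2s : r ≤ 2 * s := by
    have : Real.sqrt d / (2*n) + Real.sqrt d / (2*n) = Real.sqrt d / n := by field_simp; ring
    linarith [hrle, hsd, this]
  have hr0 : 0 ≤ r := norm_nonneg _
  have hsq : r^2 ≤ 4 * s^2 := by nlinarith
  calc min 1 (r^2) ≤ min 1 (4 * s^2) := min_le_min le_rfl hsq
    _ ≤ 4 * min 1 (s^2) := by
        rcases le_total (s^2) 1 with h | h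
        · rw [min_eq_right h]
          exact min_le_right _ _
        · rw [min_eq_left h]
          calc min 1 (4*s^2) ≤ 1 := min_le_left _ _
            _ ≤ 4 * 1 := by norm_num


lemma CnpEs_eq (d n : ℕ) (p : ℝ) (k ks : Eucl d → Eucl d → ℝ) (hk0 : ∀ x y, 0 ≤ k x y)
    (hkm : Measurable (Function.uncurry k))
    (hks : ∀ x y, ks x y = (k x y + k y x) / 2) (a b : Fin d → ℤ) :
    CnpEs d n p k a b =
      if ‖latticePt d n a - latticePt d n b‖ > 2 * Real.sqrt d / (n : ℝ) ^ p then
        (n : ℝ≥0∞) ^ d * ∫⁻ x in cube d n a, ∫⁻ y in cube d n b, ENNReal.ofReal (ks x y)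
      else 0 := by
  unfold CnpEs CnpE
  rw [norm_sub_rev (latticePt d n b)]
  by_cases hcond : ‖latticePt d n a - latticePt d n b‖ > 2 * Real.sqrt d / (n:ℝ)^p
  · simp only [if_pos hcond]
    have hswap : (∫⁻ x in cube d n b, ∫⁻ y in cube d n a, ENNReal.ofReal (k x y))
        = ∫⁻ x in cube d n a, ∫⁻ y in cube d n b, ENNReal.ofReal (k y x) :=
      lintegral_lintegral_swap (ENNReal.measurable_ofReal.comp hkm).aemeasurable
    rw [hswap]
    have hF1 : Measurable fun x => ∫⁻ y in cube d n b, ENNReal.ofReal (k x y) :=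
      Measurable.lintegral_prod_right (ENNReal.measurable_ofReal.comp hkm)
    have key : (∫⁻ x in cube d n a, ∫⁻ y in cube d n b, ENNReal.ofReal (k x y))
        + (∫⁻ x in cube d n a, ∫⁻ y in cube d n b, ENNReal.ofReal (k y x))
        = 2 * ∫⁻ x in cube d n a, ∫⁻ y in cube d n b, ENNReal.ofReal (ks x y) := by
      rw [← lintegral_add_left hF1, ← lintegral_const_mul' 2 _ (by simp)]
      refine lintegral_congr fun x => ?_
      rw [← lintegral_add_left
        (show Measurable fun y => ENNReal.ofReal (k x y) from
          ENNReal.measurable_ofReal.comp (hkm.comp measurable_prodMk_left)),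
        ← lintegral_const_mul' 2 _ (by simp)]
      refine lintegral_congr fun y => ?_
      rw [← ENNReal.ofReal_add (hk0 x y) (hk0 y x),
        show (2:ℝ≥0∞) = ENNReal.ofReal 2 by simp, ← ENNReal.ofReal_mul (by norm_num)]
      congr 1
      rw [hks]; ring
    rw [← mul_add, key, ← mul_assoc, mul_comm ((n:ℝ≥0∞)^d) 2, mul_assoc,
      mul_comm (2:ℝ≥0∞), mul_div_assoc, ENNReal.div_self (by norm_num) (by norm_num), mul_one]
  · simp only [if_neg hcond]
    simp


lemma term_bound (d n : ℕ) (hn : 1 ≤ n) (p : ℝ) (hp1 : p ≤ 1)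
    (k ks : Eucl d → Eucl d → ℝ) (hk0 : ∀ x y, 0 ≤ k x y)
    (hkm : Measurable (Function.uncurry k))
    (hks : ∀ x y, ks x y = (k x y + k y x) / 2) (a b : Fin d → ℤ) :
    ENNReal.ofReal (min 1 (‖latticePt d n b‖ ^ 2)) * CnpEs d n p k a (a + b)
      ≤ 4 * ((n : ℝ≥0∞) ^ d * ∫⁻ x in cube d n a, ∫⁻ y in cube d n (a + b),
          ENNReal.ofReal (min 1 (‖y - x‖ ^ 2) * ks x y)) := by
  have hn0 : (0:ℝ) < n := by exact_mod_cast Nat.lt_of_lt_of_le Nat.zero_lt_one hn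
  have hks0 : ∀ x y, 0 ≤ ks x y := fun x y => by
    rw [hks]; have := hk0 x y; have := hk0 y x; linarith
  rw [CnpEs_eq d n p k ks hk0 hkm hks]
  by_cases hcond : ‖latticePt d n a - latticePt d n (a+b)‖ > 2 * Real.sqrt d / (n:ℝ)^p
  case neg => rw [if_neg hcond]; simp
  rw [if_pos hcond]
  have hlpb : ‖latticePt d n a - latticePt d n (a+b)‖ = ‖latticePt d n b‖ := by
    rw [latticePt_add]
    have : latticePt d n a - (latticePt d n a + latticePt d n b) = -(latticePt d n b) := by abel
    rw [this, norm_neg]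
  have hb : 2 * Real.sqrt d / (n:ℝ) < ‖latticePt d n b‖ := by
    have h1 : ((n:ℝ))^p ≤ n := by
      calc ((n:ℝ))^p ≤ ((n:ℝ))^(1:ℝ) :=
            Real.rpow_le_rpow_of_exponent_le (by exact_mod_cast hn) hp1
        _ = n := Real.rpow_one _
    have h2 : 2 * Real.sqrt d / (n:ℝ) ≤ 2 * Real.sqrt d / (n:ℝ)^p := by
      exact div_le_div_of_nonneg_left (by positivity) (Real.rpow_pos_of_pos hn0 p) h1
    rw [← hlpb]
    exact lt_of_le_of_lt h2 hcond
  have hws : ENNReal.ofReal (min 1 (‖latticePt d n b‖ ^ 2)) ≠ ⊤ := ENNReal.ofReal_ne_top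
  have hm0 : (0:ℝ) ≤ min 1 (‖latticePt d n b‖ ^ 2) := le_min zero_le_one (sq_nonneg _)
  calc ENNReal.ofReal (min 1 (‖latticePt d n b‖ ^ 2)) *
        ((n:ℝ≥0∞)^d * ∫⁻ x in cube d n a, ∫⁻ y in cube d n (a+b), ENNReal.ofReal (ks x y))
      = (n:ℝ≥0∞)^d * ∫⁻ x in cube d n a, ∫⁻ y in cube d n (a+b),
          ENNReal.ofReal (min 1 (‖latticePt d n b‖ ^ 2)) * ENNReal.ofReal (ks x y) := by
        rw [mul_left_comm]
        congr 1
        rw [← lintegral_const_mul' _ _ hws]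
        refine lintegral_congr fun x => ?_
        rw [← lintegral_const_mul' _ _ hws]
    _ ≤ (n:ℝ≥0∞)^d * ∫⁻ x in cube d n a, ∫⁻ y in cube d n (a+b),
          4 * ENNReal.ofReal (min 1 (‖y - x‖ ^ 2) * ks x y) := by
        refine mul_le_mul_right ?_ _
        refine setLIntegral_mono' (cube_measurable d n a) fun x hx => ?_
        refine setLIntegral_mono' (cube_measurable d n (a+b)) fun y hy => ?_
        rw [← ENNReal.ofReal_mul hm0,
          show (4:ℝ≥0∞) = ENNReal.ofReal 4 by simp, ← ENNReal.ofReal_mul (by norm_num)]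
        apply ENNReal.ofReal_le_ofReal
        have hgeo := min_sq_bound d n hn hb hx hy
        calc min 1 (‖latticePt d n b‖ ^ 2) * ks x y
            ≤ (4 * min 1 (‖y - x‖ ^ 2)) * ks x y :=
              mul_le_mul_of_nonneg_right hgeo (hks0 x y)
          _ = 4 * (min 1 (‖y - x‖ ^ 2) * ks x y) := by ring
    _ = 4 * ((n:ℝ≥0∞)^d * ∫⁻ x in cube d n a, ∫⁻ y in cube d n (a+b),
          ENNReal.ofReal (min 1 (‖y - x‖ ^ 2) * ks x y)) := by
        rw [mul_left_comm]
        congr 1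
        rw [← lintegral_const_mul' 4 _ (by simp)]
        refine lintegral_congr fun x => ?_
        rw [← lintegral_const_mul' 4 _ (by simp)]


/-- If `sup_{x ∈ B_ρ(0)} ∫ (1 ∧ |y|²) k_s(x,x+y) dy < ∞` for all `ρ > 0`, then
`limsup_n sup_{a ∈ B_ρ(0)} ∑_b (1 ∧ |b|²) C^{n,p}_s(a,a+b) < ∞` for all `ρ > 0`. -/
theorem discretization_second_moment_bounded (d : ℕ) (p : ℝ) (hp : 0 < p) (hp1 : p ≤ 1)
    (k : Eucl d → Eucl d → ℝ) (hk0 : ∀ x y, 0 ≤ k x y)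
    (hkm : Measurable (Function.uncurry k))
    (ks : Eucl d → Eucl d → ℝ) (hks : ∀ x y, ks x y = (k x y + k y x) / 2)
    (hloc : ∀ ρ : ℝ, 0 < ρ → ∃ M : ℝ≥0∞, M < ∞ ∧
      ∀ x ∈ Metric.ball (0 : Eucl d) ρ,
        (∫⁻ y, ENNReal.ofReal (min 1 (‖y‖ ^ 2) * ks x (x + y))) ≤ M) :
    ∀ ρ : ℝ, 0 < ρ →
      limsup (fun n : ℕ =>
          ⨆ a ∈ {a : Fin d → ℤ | latticePt d n a ∈ Metric.ball (0 : Eucl d) ρ},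
            ∑' b : Fin d → ℤ,
              ENNReal.ofReal (min 1 (‖latticePt d n b‖ ^ 2)) * CnpEs d n p k a (a + b))
        atTop < ∞ := by
  intro ρ hρ
  obtain ⟨M, hM, hbound⟩ := hloc (ρ + Real.sqrt d + 1)
    (by have := Real.sqrt_nonneg (d:ℝ); linarith)
  have hksm : Measurable (Function.uncurry ks) := by
    have h : Function.uncurry ks = fun q : Eucl d × Eucl d =>
        (Function.uncurry k q + Function.uncurry k q.swap) / 2 := by
      funext q; simp [Function.uncurry, hks]
    rw [h]
    exact (hkm.add (hkm.comp measurable_swap)).div_const 2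
  have hgm : Measurable (fun q : Eucl d × Eucl d =>
      ENNReal.ofReal (min 1 (‖q.2 - q.1‖ ^ 2) * ks q.1 q.2)) := by
    apply ENNReal.measurable_ofReal.comp
    exact (measurable_const.min
      ((continuous_snd.sub continuous_fst).norm.measurable.pow_const 2)).mul hksm
  have key : ∀ n : ℕ, 1 ≤ n →
      (⨆ a ∈ {a : Fin d → ℤ | latticePt d n a ∈ Metric.ball (0 : Eucl d) ρ},
        ∑' b : Fin d → ℤ,
          ENNReal.ofReal (min 1 (‖latticePt d n b‖ ^ 2)) * CnpEs d n p k a (a + b))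
        ≤ 4 * M := by
    intro n hn
    have hn0 : (0:ℝ) < n := by exact_mod_cast Nat.lt_of_lt_of_le Nat.zero_lt_one hn
    refine iSup₂_le fun a ha => ?_
    simp only [Set.mem_setOf_eq, Metric.mem_ball, dist_zero_right] at ha
    have hdisj : Pairwise (Function.onFun Disjoint fun b : Fin d → ℤ => cube d n (a+b)) := by
      intro b c hbc
      exact cube_disjoint d n hn (fun h => hbc (by simpa using h))
    calc ∑' b : Fin d → ℤ,
          ENNReal.ofReal (min 1 (‖latticePt d n b‖ ^ 2)) * CnpEs d n p k a (a + b)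
        ≤ ∑' b : Fin d → ℤ, 4 * ((n : ℝ≥0∞) ^ d * ∫⁻ x in cube d n a,
            ∫⁻ y in cube d n (a + b), ENNReal.ofReal (min 1 (‖y - x‖ ^ 2) * ks x y)) :=
          ENNReal.tsum_le_tsum fun b => term_bound d n hn p hp1 k ks hk0 hkm hks a b
      _ = 4 * ((n : ℝ≥0∞) ^ d * ∑' b : Fin d → ℤ, ∫⁻ x in cube d n a,
            ∫⁻ y in cube d n (a + b), ENNReal.ofReal (min 1 (‖y - x‖ ^ 2) * ks x y)) := by
          rw [ENNReal.tsum_mul_left, ENNReal.tsum_mul_left]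
      _ = 4 * ((n : ℝ≥0∞) ^ d * ∫⁻ x in cube d n a, ∑' b : Fin d → ℤ,
            ∫⁻ y in cube d n (a + b), ENNReal.ofReal (min 1 (‖y - x‖ ^ 2) * ks x y)) := by
          rw [lintegral_tsum fun b => (Measurable.lintegral_prod_right
            (show Measurable (Function.uncurry fun x y =>
              ENNReal.ofReal (min 1 (‖y - x‖ ^ 2) * ks x y)) from hgm)).aemeasurable]
      _ ≤ 4 * ((n : ℝ≥0∞) ^ d * ∫⁻ _x in cube d n a, M) := by
          refine mul_le_mul_right (mul_le_mul_right ?_ _) _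
          refine setLIntegral_mono' (cube_measurable d n a) fun x hx => ?_
          have hxball : x ∈ Metric.ball (0 : Eucl d) (ρ + Real.sqrt d + 1) := by
            rw [Metric.mem_ball, dist_zero_right]
            have h1 := norm_sub_latticePt_le d n hn hx
            have h2 : ‖x‖ ≤ ‖latticePt d n a‖ + ‖x - latticePt d n a‖ := by
              calc ‖x‖ = ‖latticePt d n a + (x - latticePt d n a)‖ := by rw [add_sub_cancel]
                _ ≤ _ := norm_add_le _ _
            have h3 : Real.sqrt d / (2*(n:ℝ)) ≤ Real.sqrt d := by
              apply div_le_self (Real.sqrt_nonneg _)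
              have : (1:ℝ) ≤ n := by exact_mod_cast hn
              linarith
            linarith
          calc ∑' b : Fin d → ℤ, ∫⁻ y in cube d n (a + b),
                ENNReal.ofReal (min 1 (‖y - x‖ ^ 2) * ks x y)
              = ∫⁻ y in ⋃ b : Fin d → ℤ, cube d n (a + b),
                  ENNReal.ofReal (min 1 (‖y - x‖ ^ 2) * ks x y) :=
                (lintegral_iUnion (fun b => cube_measurable d n (a+b)) hdisj _).symm
            _ ≤ ∫⁻ y, ENNReal.ofReal (min 1 (‖y - x‖ ^ 2) * ks x y) :=
                setLIntegral_le_lintegral _ _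
            _ = ∫⁻ z, ENNReal.ofReal (min 1 (‖(x + z) - x‖ ^ 2) * ks x (x + z)) :=
                (lintegral_add_left_eq_self
                  (fun y => ENNReal.ofReal (min 1 (‖y - x‖ ^ 2) * ks x y)) x).symm
            _ = ∫⁻ z, ENNReal.ofReal (min 1 (‖z‖ ^ 2) * ks x (x + z)) := by
                refine lintegral_congr fun z => ?_
                rw [add_sub_cancel_left]
            _ ≤ M := hbound x hxball
      _ = 4 * ((n : ℝ≥0∞) ^ d * (M * volume (cube d n a))) := by rw [setLIntegral_const]
      _ = 4 * M := by
          rw [volume_cube]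
          have h1 : (n:ℝ≥0∞)^d * (M * (ENNReal.ofReal (1/(n:ℝ)))^d)
              = M * ((n:ℝ≥0∞) * ENNReal.ofReal (1/(n:ℝ)))^d := by
            rw [mul_pow]; ring
          have hone : (n:ℝ≥0∞) * ENNReal.ofReal (1/(n:ℝ)) = 1 := by
            rw [show ((n:ℕ) : ℝ≥0∞) = ENNReal.ofReal ((n:ℕ):ℝ) from (ENNReal.ofReal_natCast n).symm,
              ← ENNReal.ofReal_mul (by positivity), mul_one_div, div_self (ne_of_gt hn0),
              ENNReal.ofReal_one]
          rw [h1, hone, one_pow, mul_one]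
  have h4M : (4:ℝ≥0∞) * M < ⊤ := ENNReal.mul_lt_top (by norm_num) hM
  refine lt_of_le_of_lt (Filter.limsup_le_of_le (by isBoundedDefault) ?_) h4M
  exact Filter.eventually_atTop.2 ⟨1, fun n hn => key n hn⟩
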